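/- In counting p(F(ν)) for the fattening of a necklace ν on letters {1,...,k+1} (k+1 odd), selections that choose at least two beads from the same cluster contribute zero in total: the set of such selections can be partitioned into pairs with opposite permutation parity. -/
import Mathlib


open scoped Classical

/-- Positions of the fattening `F(ν)` of a necklace `w : Fin m → ℕ` on letters
`{0,…,k}`: the bead of origin `b` together with a position inside its cluster
`(k, k-1, …, w b, w b, …, k-1, k)` of length `2(k+1-w b)`. -/
def FatPos (k m : ℕ) (w : Fin m → ℕ) : Type :=
  Σ b : Fin m, Fin (2 * (k + 1 - w b))

noncomputable instance (k m : ℕ) (w : Fin m → ℕ) : Fintype (FatPos k m w) := by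
  unfold FatPos; infer_instance

/-- The label of a position of the fattening: position `j` inside the cluster of a
bead labeled `a = w b` carries the letter `k - j` in the first (descending) half and
`j + 2a - (k+1)` in the second (ascending) half. -/
def fatLabel (k m : ℕ) (w : Fin m → ℕ) : FatPos k m w → ℕ := fun p =>
  if (p.2 : ℕ) < k + 1 - w p.1 then k - (p.2 : ℕ) else (p.2 : ℕ) + 2 * w p.1 - (k + 1)

/-- The linear (cut) order on positions of the fattening. -/
def fatLt (k m : ℕ) (w : Fin m → ℕ) (p q : FatPos k m w) : Prop :=
  p.1 < q.1 ∨ (p.1 = q.1 ∧ (p.2 : ℕ) < (q.2 : ℕ))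

/-- A selection of `k` beads of the fattening, in increasing order, with pairwise
distinct labels. -/
def IsFatSelection (k m : ℕ) (w : Fin m → ℕ) (f : Fin k → FatPos k m w) : Prop :=
  (∀ i j : Fin k, i < j → fatLt k m w (f i) (f j)) ∧
    Function.Injective fun i => fatLabel k m w (f i)

/-- A bad selection: a selection choosing at least two beads from one and the same
cluster. -/
def BadSelection (k m : ℕ) (w : Fin m → ℕ) (f : Fin k → FatPos k m w) : Prop :=
  IsFatSelection k m w f ∧ ∃ i j : Fin k, i ≠ j ∧ (f i).1 = (f j).1

/-- The parity of a selection: the sign (inversion parity) of the word consisting of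
the `k` chosen labels in order followed by the unique omitted letter of `{0,…,k}`. -/
def fatParity (k m : ℕ) (w : Fin m → ℕ) (f : Fin k → FatPos k m w) : ℤ :=
  let s : Fin (k + 1) → ℕ := fun i =>
    if h : (i : ℕ) < k then fatLabel k m w (f ⟨i, h⟩)
    else k * (k + 1) / 2 - ∑ j : Fin k, fatLabel k m w (f j)
  (-1) ^ (Finset.univ.filter fun q : Fin (k + 1) × Fin (k + 1) =>
      q.1 < q.2 ∧ s q.2 < s q.1).card

namespace BadCancel

open Finset

variable {k m : ℕ} {w : Fin m → ℕ}

/-- linearization key for the lexicographic order on positions -/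
def fkey (p : FatPos k m w) : ℕ := (p.1 : ℕ) * (2 * (k + 1)) + (p.2 : ℕ)

lemma snd_lt_bound (p : FatPos k m w) : (p.2 : ℕ) < 2 * (k + 1) := by
  have h := p.2.isLt
  have : 2 * (k + 1 - w p.1) ≤ 2 * (k + 1) := by omega
  omega

lemma fatLt_key {p q : FatPos k m w} (h : fatLt k m w p q) : fkey p < fkey q := by
  have hp := snd_lt_bound p
  have hq := snd_lt_bound q
  rcases h with h | ⟨h1, h2⟩
  · have h' : (p.1 : ℕ) < (q.1 : ℕ) := h
    unfold fkey
    nlinarith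
  · have h1' : (p.1 : ℕ) = (q.1 : ℕ) := by rw [h1]
    unfold fkey
    rw [h1']
    omega

lemma key_fatLt {p q : FatPos k m w} (h : fkey p < fkey q) : fatLt k m w p q := by
  rcases lt_trichotomy p.1 q.1 with h1 | h1 | h1
  · exact Or.inl h1
  · refine Or.inr ⟨h1, ?_⟩
    have h1' : (p.1 : ℕ) = (q.1 : ℕ) := by rw [h1]
    unfold fkey at h
    rw [h1'] at h
    omega
  · exact absurd (fatLt_key (Or.inl h1 : fatLt k m w q p)) (by omega)

/-- bead component is monotone along a sorted selection -/
lemma bead_mono {f : Fin k → FatPos k m w}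
    (hf : ∀ i j : Fin k, i < j → fatLt k m w (f i) (f j)) {i j : Fin k} (hij : i ≤ j) :
    (f i).1 ≤ (f j).1 := by
  rcases eq_or_lt_of_le hij with rfl | hij
  · exact le_rfl
  · rcases hf i j hij with h | ⟨h, _⟩
    · exact le_of_lt h
    · exact le_of_eq h

/-- patching a strictly monotone ℕ-function at two adjacent places -/
lemma strictmono_patch {n : ℕ} (F G : Fin n → ℕ) (α β : Fin n) (hab : (α : ℕ) + 1 = (β : ℕ))
    (hF : StrictMono F) (hout : ∀ i : Fin n, i ≠ α → i ≠ β → G i = F i)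
    (h1 : ∀ γ, γ < α → F γ < G α) (h2 : G α < G β) (h3 : ∀ γ, β < γ → G β < F γ) :
    StrictMono G := by
  have vne : ∀ x y : Fin n, (x : ℕ) ≠ (y : ℕ) → x ≠ y := fun x y h hh => h (by rw [hh])
  intro i j hij
  have hij' : (i : ℕ) < (j : ℕ) := hij
  by_cases hiα : i = α
  · subst hiα
    by_cases hjβ : j = β
    · subst hjβ; exact h2
    · have hjβ' : (j : ℕ) ≠ (β : ℕ) := fun hh => hjβ (Fin.ext hh)
      have hj : β < j := by rw [Fin.lt_def]; omega
      have := h3 j hj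
      rw [hout j (vne _ _ (by omega)) hjβ]
      omega
  · have hiα' : (i : ℕ) ≠ (α : ℕ) := fun hh => hiα (Fin.ext hh)
    by_cases hiβ : i = β
    · subst hiβ
      have hjα : j ≠ α := vne _ _ (by omega)
      have hjβ : j ≠ i := ne_of_gt hij
      rw [hout j hjα hjβ]
      exact h3 j hij
    · have hiβ' : (i : ℕ) ≠ (β : ℕ) := fun hh => hiβ (Fin.ext hh)
      rw [hout i hiα hiβ]
      by_cases hjα : j = α
      · subst hjα; exact h1 i hij
      · have hjα' : (j : ℕ) ≠ (α : ℕ) := fun hh => hjα (Fin.ext hh)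
        by_cases hjβ : j = β
        · subst hjβ
          have hiα2 : i < α := by rw [Fin.lt_def]; omega
          exact lt_trans (h1 i hiα2) h2
        · rw [hout j hjα hjβ]
          exact hF hij


/-- the monotonicity of an adjacent swap away from the swapped pair -/
lemma swap_mono {n : ℕ} (a b : Fin n) (hab : (a : ℕ) + 1 = (b : ℕ)) {x y : Fin n}
    (hxy : x < y) (hne : ¬(x = a ∧ y = b)) : Equiv.swap a b x < Equiv.swap a b y := by
  have hab' : a < b := by rw [Fin.lt_def]; omega
  have hxy' : (x : ℕ) < (y : ℕ) := hxy
  by_cases hxa : x = a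
  · subst hxa
    have hyb : y ≠ b := fun hh => hne ⟨rfl, hh⟩
    have hyb' : (y : ℕ) ≠ (b : ℕ) := fun hh => hyb (Fin.ext hh)
    rw [Equiv.swap_apply_left, Equiv.swap_apply_of_ne_of_ne (ne_of_gt hxy) hyb]
    rw [Fin.lt_def]; omega
  · have hxa' : (x : ℕ) ≠ (a : ℕ) := fun hh => hxa (Fin.ext hh)
    by_cases hxb : x = b
    · subst hxb
      have hya : y ≠ a := by
        intro hh; subst hh; rw [Fin.lt_def] at hab'; omega
      have hyb : y ≠ x := ne_of_gt hxy
      rw [Equiv.swap_apply_right, Equiv.swap_apply_of_ne_of_ne hya hyb]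
      exact lt_trans hab' hxy
    · have hxb' : (x : ℕ) ≠ (b : ℕ) := fun hh => hxb (Fin.ext hh)
      rw [Equiv.swap_apply_of_ne_of_ne hxa hxb]
      by_cases hya : y = a
      · subst hya
        rw [Equiv.swap_apply_left, Fin.lt_def]; omega
      · by_cases hyb : y = b
        · subst hyb
          rw [Equiv.swap_apply_right, Fin.lt_def]; omega
        · rw [Equiv.swap_apply_of_ne_of_ne hya hyb]
          exact hxy

/-- inversion-parity flips under an adjacent transposition of distinct values -/
lemma adj_swap_parity {n : ℕ} (s : Fin n → ℕ) (a b : Fin n) (hab : (a : ℕ) + 1 = (b : ℕ))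
    (hne : s a ≠ s b) :
    ((-1 : ℤ)) ^ (Finset.univ.filter fun q : Fin n × Fin n =>
        q.1 < q.2 ∧ (s ∘ Equiv.swap a b) q.2 < (s ∘ Equiv.swap a b) q.1).card
      = -((-1 : ℤ)) ^ (Finset.univ.filter fun q : Fin n × Fin n =>
        q.1 < q.2 ∧ s q.2 < s q.1).card := by
  classical
  set σ := Equiv.swap a b with hσ
  set s' : Fin n → ℕ := s ∘ σ with hs'
  have hab' : a < b := by rw [Fin.lt_def]; omega
  have hσσ : ∀ x, σ (σ x) = x := fun x => Equiv.swap_apply_self a b x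
  have hs'σ : ∀ x, s' (σ x) = s x := fun x => by simp [hs', hσσ]
  set I : (Fin n → ℕ) → Finset (Fin n × Fin n) := fun t =>
    Finset.univ.filter fun q : Fin n × Fin n => q.1 < q.2 ∧ t q.2 < t q.1 with hI
  have himg : ∀ x y : Fin n, x < y → (x, y) ≠ (a, b) → σ x < σ y := by
    intro x y h1 h2
    refine swap_mono a b hab h1 ?_
    rintro ⟨rfl, rfl⟩; exact h2 rfl
  have hcard : ((I s').erase (a, b)).card = ((I s).erase (a, b)).card := by
    apply Finset.card_bij' (fun q _ => (σ q.1, σ q.2)) (fun q _ => (σ q.1, σ q.2))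
    · rintro ⟨x, y⟩ hq
      rw [Finset.mem_erase, hI, Finset.mem_filter] at hq ⊢
      obtain ⟨hne', _, h1, h2⟩ := hq
      refine ⟨?_, Finset.mem_univ _, himg x y h1 hne', ?_⟩
      · intro hh
        have hx : x = σ a := by
          have := congrArg Prod.fst hh; simp at this; rw [← this, hσσ]
        have hy : y = σ b := by
          have := congrArg Prod.snd hh; simp at this; rw [← this, hσσ]
        rw [Equiv.swap_apply_left] at hx
        rw [Equiv.swap_apply_right] at hy
        subst hx; subst hy
        exact absurd h1 (not_lt.mpr (le_of_lt hab'))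
      · show s (σ y) < s (σ x)
        exact h2
    · rintro ⟨x, y⟩ hq
      rw [Finset.mem_erase, hI, Finset.mem_filter] at hq ⊢
      obtain ⟨hne', _, h1, h2⟩ := hq
      refine ⟨?_, Finset.mem_univ _, himg x y h1 hne', ?_⟩
      · intro hh
        have hx : x = σ a := by
          have := congrArg Prod.fst hh; simp at this; rw [← this, hσσ]
        have hy : y = σ b := by
          have := congrArg Prod.snd hh; simp at this; rw [← this, hσσ]
        rw [Equiv.swap_apply_left] at hx
        rw [Equiv.swap_apply_right] at hy
        subst hx; subst hy
        exact absurd h1 (not_lt.mpr (le_of_lt hab'))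
      · show s' (σ y) < s' (σ x)
        rw [hs'σ, hs'σ]
        exact h2
    · rintro ⟨x, y⟩ _; simp [hσσ]
    · rintro ⟨x, y⟩ _; simp [hσσ]
  have hsa : s' a = s b := by rw [hs']; simp [hσ]
  have hsb : s' b = s a := by rw [hs']; simp [hσ]
  have hmem : ((a, b) ∈ I s ↔ s b < s a) ∧ ((a, b) ∈ I s' ↔ s a < s b) := by
    constructor <;> (rw [hI]; simp [Finset.mem_filter, hab', hsa, hsb])
  rcases lt_or_gt_of_ne hne with h | h
  · have h1 : (a, b) ∉ I s := by rw [hmem.1]; omega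
    have h2 : (a, b) ∈ I s' := hmem.2.mpr h
    have e1 : (I s).card = ((I s).erase (a, b)).card := by
      rw [Finset.erase_eq_of_notMem h1]
    have e2 : (I s').card = ((I s').erase (a, b)).card + 1 := by
      rw [Finset.card_erase_of_mem h2]
      have : 0 < (I s').card := Finset.card_pos.mpr ⟨_, h2⟩
      omega
    show ((-1 : ℤ)) ^ (I s').card = -((-1 : ℤ)) ^ (I s).card
    rw [e1, e2, ← hcard, pow_succ]
    ring
  · have h1 : (a, b) ∈ I s := hmem.1.mpr h
    have h2 : (a, b) ∉ I s' := by rw [hmem.2]; omega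
    have e1 : (I s).card = ((I s).erase (a, b)).card + 1 := by
      rw [Finset.card_erase_of_mem h1]
      have : 0 < (I s).card := Finset.card_pos.mpr ⟨_, h1⟩
      omega
    have e2 : (I s').card = ((I s').erase (a, b)).card := by
      rw [Finset.erase_eq_of_notMem h2]
    show ((-1 : ℤ)) ^ (I s').card = -((-1 : ℤ)) ^ (I s).card
    rw [e1, e2, hcard, pow_succ]
    ring


/-- labels along a selection -/
def labf (f : Fin k → FatPos k m w) : Fin k → ℕ := fun i => fatLabel k m w (f i)

/-- mirror of a position inside its cluster -/
def mir (p : FatPos k m w) : FatPos k m w :=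
  ⟨p.1, ⟨2 * (k + 1 - w p.1) - 1 - (p.2 : ℕ), by have := p.2.isLt; omega⟩⟩

lemma mir_fst (p : FatPos k m w) : (mir p).1 = p.1 := rfl

lemma mir_snd (p : FatPos k m w) : ((mir p).2 : ℕ) = 2 * (k + 1 - w p.1) - 1 - (p.2 : ℕ) := rfl

lemma mir_mir (p : FatPos k m w) : mir (mir p) = p := by
  obtain ⟨b, j⟩ := p
  refine congrArg (Sigma.mk b) (Fin.ext ?_)
  show 2 * (k + 1 - w b) - 1 - (2 * (k + 1 - w b) - 1 - (j : ℕ)) = (j : ℕ)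
  have := j.isLt
  omega

lemma lb_mirror {a j : ℕ} (ha : a ≤ k) (hj : j < 2 * (k + 1 - a)) :
    (if 2 * (k + 1 - a) - 1 - j < k + 1 - a then k - (2 * (k + 1 - a) - 1 - j)
      else (2 * (k + 1 - a) - 1 - j) + 2 * a - (k + 1))
    = if j < k + 1 - a then k - j else j + 2 * a - (k + 1) := by
  split_ifs <;> omega

lemma label_mir (hw : ∀ b, w b ≤ k) (p : FatPos k m w) :
    fatLabel k m w (mir p) = fatLabel k m w p := by
  have ha := hw p.1
  have hj := p.2.isLt
  show (if ((mir p).2 : ℕ) < k + 1 - w (mir p).1 then k - ((mir p).2 : ℕ)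
      else ((mir p).2 : ℕ) + 2 * w (mir p).1 - (k + 1)) = _
  rw [mir_snd]
  show _ = (if (p.2 : ℕ) < k + 1 - w p.1 then k - (p.2 : ℕ) else (p.2 : ℕ) + 2 * w p.1 - (k + 1))
  exact lb_mirror ha hj

lemma lb_package {a j : ℕ} (ha : a ≤ k) (hj : j < 2 * (k + 1 - a)) :
    a ≤ (if j < k + 1 - a then k - j else j + 2 * a - (k + 1)) ∧
      (if j < k + 1 - a then k - j else j + 2 * a - (k + 1)) ≤ k ∧
      (j = k - (if j < k + 1 - a then k - j else j + 2 * a - (k + 1)) ∨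
        j = 2 * (k + 1 - a) - 1 - (k - (if j < k + 1 - a then k - j else j + 2 * a - (k + 1)))) := by
  split_ifs <;> omega

def beadFil (f : Fin k → FatPos k m w) (b : Fin m) : Finset (Fin k) :=
  Finset.univ.filter fun i => (f i).1 = b

def beadSet (f : Fin k → FatPos k m w) : Finset (Fin m) :=
  Finset.univ.filter fun b => 2 ≤ (beadFil f b).card

lemma beadSet_nonempty {f : Fin k → FatPos k m w} (hf : BadSelection k m w f) :
    (beadSet f).Nonempty := by
  obtain ⟨_, i, j, hij, hb⟩ := hf
  refine ⟨(f j).1, ?_⟩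
  simp only [beadSet, Finset.mem_filter]
  refine ⟨Finset.mem_univ _, ?_⟩
  have hsub : ({i, j} : Finset (Fin k)) ⊆ beadFil f (f j).1 := by
    intro x hx
    rw [Finset.mem_insert, Finset.mem_singleton] at hx
    simp only [beadFil, Finset.mem_filter]
    rcases hx with rfl | rfl
    · exact ⟨Finset.mem_univ _, hb⟩
    · exact ⟨Finset.mem_univ _, rfl⟩
  calc 2 = ({i, j} : Finset (Fin k)).card := (Finset.card_pair hij).symm
    _ ≤ _ := Finset.card_le_card hsub

noncomputable def bstar (f : Fin k → FatPos k m w) (hf : BadSelection k m w f) : Fin m :=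
  (beadSet f).min' (beadSet_nonempty hf)

noncomputable def Sf (f : Fin k → FatPos k m w) (hf : BadSelection k m w f) : Finset (Fin k) :=
  beadFil f (bstar f hf)

lemma two_le_Sf (f : Fin k → FatPos k m w) (hf : BadSelection k m w f) : 2 ≤ (Sf f hf).card := by
  have h := Finset.min'_mem (beadSet f) (beadSet_nonempty hf)
  simp only [beadSet, Finset.mem_filter] at h
  exact h.2

lemma Sf_nonempty (f : Fin k → FatPos k m w) (hf : BadSelection k m w f) : (Sf f hf).Nonempty := by
  rw [← Finset.card_pos]
  have := two_le_Sf f hf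
  omega

noncomputable def argminLab (f : Fin k → FatPos k m w) (T : Finset (Fin k)) (hT : T.Nonempty) :
    Fin k :=
  (T.filter fun i => labf f i = (T.image (labf f)).min' (hT.image _)).min'
    (by
      obtain ⟨ii, hii, he⟩ := Finset.mem_image.mp ((T.image (labf f)).min'_mem (hT.image _))
      exact ⟨ii, Finset.mem_filter.mpr ⟨hii, he⟩⟩)

lemma argminLab_spec (f : Fin k → FatPos k m w) (T : Finset (Fin k)) (hT : T.Nonempty) :
    argminLab f T hT ∈ T ∧ ∀ i ∈ T, labf f (argminLab f T hT) ≤ labf f i := by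
  have h : argminLab f T hT ∈ T.filter fun i => labf f i = (T.image (labf f)).min' (hT.image _) :=
    Finset.min'_mem _ _
  rw [Finset.mem_filter] at h
  refine ⟨h.1, fun i hi => ?_⟩
  rw [h.2]
  exact Finset.min'_le _ _ (Finset.mem_image_of_mem _ hi)

lemma argminLab_unique (f : Fin k → FatPos k m w) (T : Finset (Fin k)) (hT : T.Nonempty)
    (hinj : Function.Injective (labf f)) {j : Fin k} (hj : j ∈ T)
    (hmin : ∀ i ∈ T, labf f j ≤ labf f i) : argminLab f T hT = j := by
  have h := argminLab_spec f T hT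
  exact hinj (le_antisymm (h.2 j hj) (hmin _ h.1))

noncomputable def irf (f : Fin k → FatPos k m w) (hf : BadSelection k m w f) : Fin k :=
  argminLab f (Sf f hf) (Sf_nonempty f hf)

lemma erase_nonempty (f : Fin k → FatPos k m w) (hf : BadSelection k m w f) :
    ((Sf f hf).erase (irf f hf)).Nonempty := by
  rw [← Finset.card_pos]
  have h1 := two_le_Sf f hf
  have h2 := Finset.card_erase_of_mem (argminLab_spec f (Sf f hf) (Sf_nonempty f hf)).1
  unfold irf
  omega

noncomputable def iqf (f : Fin k → FatPos k m w) (hf : BadSelection k m w f) : Fin k :=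
  argminLab f ((Sf f hf).erase (irf f hf)) (erase_nonempty f hf)

noncomputable def construct (f : Fin k → FatPos k m w) (hf : BadSelection k m w f) :
    Fin k → FatPos k m w := fun i =>
  Function.update f (iqf f hf) (mir (f (iqf f hf))) (Equiv.swap (iqf f hf) (irf f hf) i)

def sfun (f : Fin k → FatPos k m w) : Fin (k + 1) → ℕ := fun i =>
  if h : (i : ℕ) < k then fatLabel k m w (f ⟨i, h⟩)
  else k * (k + 1) / 2 - ∑ j : Fin k, fatLabel k m w (f j)

lemma fatParity_def (f : Fin k → FatPos k m w) :
    fatParity k m w f = (-1) ^ (Finset.univ.filter fun q : Fin (k + 1) × Fin (k + 1) =>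
      q.1 < q.2 ∧ sfun f q.2 < sfun f q.1).card := rfl

lemma min'_congr {α : Type*} [LinearOrder α] {s t : Finset α} (h : s = t) (hs : s.Nonempty) :
    s.min' hs = t.min' (h ▸ hs) := by subst h; rfl


lemma construct_spec (hw : ∀ b, w b ≤ k) (f : Fin k → FatPos k m w)
    (hf : BadSelection k m w f) :
    BadSelection k m w (construct f hf) ∧
      (∀ hg : BadSelection k m w (construct f hf), construct (construct f hf) hg = f) ∧
      construct f hf ≠ f ∧
      fatParity k m w (construct f hf) = -fatParity k m w f := by
  obtain ⟨⟨hsort, hinj⟩, -⟩ := id hf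
  set g := construct f hf with hg_def
  set iq := iqf f hf with hiq_def
  set ir := irf f hf with hir_def
  set b0 := bstar f hf with hb0_def
  have hspecR := argminLab_spec f (Sf f hf) (Sf_nonempty f hf)
  have hspecQ := argminLab_spec f ((Sf f hf).erase (irf f hf)) (erase_nonempty f hf)
  have hirS : ir ∈ Sf f hf := hspecR.1
  have hirmin : ∀ i ∈ Sf f hf, labf f ir ≤ labf f i := hspecR.2
  have hiqE : iq ∈ (Sf f hf).erase ir := hspecQ.1
  have hiqmin : ∀ i ∈ (Sf f hf).erase ir, labf f iq ≤ labf f i := hspecQ.2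
  have hiqS : iq ∈ Sf f hf := Finset.mem_of_mem_erase hiqE
  have hne : iq ≠ ir := Finset.ne_of_mem_erase hiqE
  have hinj' : Function.Injective (labf f) := hinj
  have hlabQR : labf f ir < labf f iq :=
    lt_of_le_of_ne (hirmin iq hiqS) fun h => hne (hinj' h).symm
  have hmemS : ∀ i : Fin k, i ∈ Sf f hf ↔ (f i).1 = b0 := by
    intro i; simp [Sf, beadFil, hb0_def]
  have hother : ∀ i ∈ Sf f hf, i ≠ iq → i ≠ ir → labf f iq < labf f i := by
    intro i hi hi1 hi2
    exact lt_of_le_of_ne (hiqmin i (Finset.mem_erase.mpr ⟨hi2, hi⟩))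
      fun h => hi1 (hinj' h).symm
  set a := w b0 with ha_def
  have ha : a ≤ k := hw b0
  set L := 2 * (k + 1 - a) with hL_def
  set pos : Fin k → ℕ := fun i => ((f i).2 : ℕ) with hpos_def
  have hposL : ∀ i ∈ Sf f hf, pos i < L := by
    intro i hi
    have hb := (hmemS i).mp hi
    have h2 := (f i).2.isLt
    show ((f i).2 : ℕ) < L
    rw [hL_def, ha_def, ← hb]
    exact h2
  have hlabel_eq : ∀ p : FatPos k m w, p.1 = b0 →
      fatLabel k m w p = if (p.2 : ℕ) < k + 1 - a then k - (p.2 : ℕ)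
        else (p.2 : ℕ) + 2 * a - (k + 1) := by
    rintro ⟨b, j⟩ hb
    rw [ha_def, ← hb]
    rfl
  have hpkg : ∀ i ∈ Sf f hf, a ≤ labf f i ∧ labf f i ≤ k ∧
      (pos i = k - labf f i ∨ pos i = L - 1 - (k - labf f i)) := by
    intro i hi
    have hb := (hmemS i).mp hi
    have hli : labf f i = if pos i < k + 1 - a then k - pos i
        else pos i + 2 * a - (k + 1) := hlabel_eq (f i) hb
    rw [hli, hL_def]
    exact lb_package ha (by rw [← hL_def]; exact hposL i hi)
  have hkeymono : StrictMono fun i => fkey (f i) := fun i j h => fatLt_key (hsort i j h)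
  have hbead : ∀ {i j : Fin k}, i ≤ j → (f i).1 ≤ (f j).1 := fun h => bead_mono hsort h
  have hint : ∀ {i l j : Fin k}, i ∈ Sf f hf → j ∈ Sf f hf → i ≤ l → l ≤ j → l ∈ Sf f hf := by
    intro i l j hi hj h1 h2
    have hbi := (hmemS i).mp hi
    have hbj := (hmemS j).mp hj
    rw [hmemS]
    have u1 := hbead h1
    have u2 := hbead h2
    rw [hbi] at u1
    rw [hbj] at u2
    exact le_antisymm u2 u1
  have hposmono : ∀ {i j : Fin k}, i ∈ Sf f hf → j ∈ Sf f hf → i < j → pos i < pos j := by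
    intro i j hi hj hij
    rcases hsort i j hij with h | ⟨_, h⟩
    · exfalso
      rw [(hmemS i).mp hi, (hmemS j).mp hj] at h
      exact lt_irrefl _ h
    · exact h
  set σ := Equiv.swap iq ir with hσ_def
  have hσiq : σ iq = ir := Equiv.swap_apply_left _ _
  have hσir : σ ir = iq := Equiv.swap_apply_right _ _
  have hσout : ∀ i, i ≠ iq → i ≠ ir → σ i = i := fun i h1 h2 =>
    Equiv.swap_apply_of_ne_of_ne h1 h2
  have hgi : ∀ i, g i = Function.update f iq (mir (f iq)) (σ i) := fun i => rfl
  have hgiq : g iq = f ir := by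
    rw [hgi, hσiq, Function.update_of_ne (Ne.symm hne)]
  have hgir : g ir = mir (f iq) := by
    rw [hgi, hσir, Function.update_self]
  have hgout : ∀ i, i ≠ iq → i ≠ ir → g i = f i := by
    intro i h1 h2
    rw [hgi, hσout i h1 h2, Function.update_of_ne h1]
  have hglab : ∀ i, fatLabel k m w (g i) = labf f (σ i) := by
    intro i
    rw [hgi]
    by_cases h : σ i = iq
    · rw [h, Function.update_self, label_mir hw]; rfl
    · rw [Function.update_of_ne h]; rfl
  have hgbead : ∀ i, (g i).1 = (f (σ i)).1 := by
    intro i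
    rw [hgi]
    by_cases h : σ i = iq
    · rw [h, Function.update_self, mir_fst]
    · rw [Function.update_of_ne h]
  have hmirpos : ((mir (f iq)).2 : ℕ) = L - 1 - pos iq := by
    have hwiq : 2 * (k + 1 - w (f iq).1) = L := by
      rw [(hmemS iq).mp hiqS, hL_def, ha_def]
    have hpp : pos iq = ((f iq).2 : ℕ) := rfl
    rw [mir_snd]
    omega
  have hmirb : (mir (f iq)).1 = (f iq).1 := mir_fst _
  have hPQ := hpkg iq hiqS
  have hPR := hpkg ir hirS
  have hLpos : 2 ≤ L := by
    have := hposL iq hiqS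
    omega
  have hcase : pos iq < pos ir ∨ pos ir < pos iq := by
    rcases lt_trichotomy iq ir with h | h | h
    · exact Or.inl (hposmono hiqS hirS h)
    · exact absurd h hne
    · exact Or.inr (hposmono hirS hiqS h)
  obtain ⟨α, β, hαβ, hσαβ, hlabαβ, hmono_g⟩ :
      ∃ α β : Fin k, (α : ℕ) + 1 = (β : ℕ) ∧ σ = Equiv.swap α β ∧
        labf f α ≠ labf f β ∧ StrictMono fun i => fkey (g i) := by
    rcases hcase with h | h
    · -- q before r
      have hiqlt : iq < ir := by
        rcases lt_trichotomy iq ir with h' | h' | h'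
        · exact h'
        · exact absurd h' hne
        · exact absurd (hposmono hirS hiqS h') (by omega)
      have hadjA : (iq : ℕ) + 1 = (ir : ℕ) := by
        by_contra hX
        have hlt : (iq : ℕ) + 1 < (ir : ℕ) := by
          have : (iq : ℕ) < (ir : ℕ) := hiqlt
          omega
        set l : Fin k := ⟨(iq : ℕ) + 1, by have := ir.isLt; omega⟩ with hl_def
        have hl1 : iq < l := by rw [Fin.lt_def]; simp [hl_def]
        have hl2 : l < ir := by rw [Fin.lt_def]; simp [hl_def]; omega
        have hlS : l ∈ Sf f hf := hint hiqS hirS (le_of_lt hl1) (le_of_lt hl2)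
        have hp := hpkg l hlS
        have hol := hother l hlS (ne_of_gt hl1) (ne_of_lt hl2)
        have h1 := hposmono hiqS hlS hl1
        have h2 := hposmono hlS hirS hl2
        omega
      refine ⟨iq, ir, hadjA, hσ_def, ne_of_gt hlabQR, ?_⟩
      apply strictmono_patch (fun i => fkey (f i)) _ iq ir hadjA hkeymono
      · intro i h1 h2; rw [hgout i h1 h2]
      · intro γ hγ
        rw [hgiq]
        exact hkeymono (lt_trans hγ hiqlt)
      · rw [hgiq, hgir]
        apply fatLt_key
        refine Or.inr ⟨?_, ?_⟩
        · rw [hmirb, (hmemS ir).mp hirS, (hmemS iq).mp hiqS]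
        · rw [hmirpos]
          show pos ir < L - 1 - pos iq
          omega
      · intro γ hγ
        rw [hgir]
        apply fatLt_key
        by_cases hγS : γ ∈ Sf f hf
        · refine Or.inr ⟨?_, ?_⟩
          · rw [hmirb, (hmemS iq).mp hiqS, (hmemS γ).mp hγS]
          · rw [hmirpos]
            have hγiq : γ ≠ iq := by
              have : (iq : ℕ) < (γ : ℕ) := by
                have h' : (ir : ℕ) < (γ : ℕ) := hγ
                omega
              intro hh; rw [hh] at this; omega
            have hγir : γ ≠ ir := ne_of_gt hγ
            have hp := hpkg γ hγS
            have hol := hother γ hγS hγiq hγir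
            have h1 := hposmono hirS hγS hγ
            show L - 1 - pos iq < pos γ
            omega
        · refine Or.inl ?_
          rw [hmirb]
          have hle : (f ir).1 ≤ (f γ).1 := hbead (le_of_lt hγ)
          rw [(hmemS ir).mp hirS] at hle
          rw [(hmemS iq).mp hiqS]
          exact lt_of_le_of_ne hle fun hh => hγS ((hmemS γ).mpr hh.symm)
    · -- r before q
      have hirlt : ir < iq := by
        rcases lt_trichotomy ir iq with h' | h' | h'
        · exact h'
        · exact absurd h'.symm hne
        · exact absurd (hposmono hiqS hirS h') (by omega)
      have hadjB : (ir : ℕ) + 1 = (iq : ℕ) := by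
        by_contra hX
        have hlt : (ir : ℕ) + 1 < (iq : ℕ) := by
          have : (ir : ℕ) < (iq : ℕ) := hirlt
          omega
        set l : Fin k := ⟨(ir : ℕ) + 1, by have := iq.isLt; omega⟩ with hl_def
        have hl1 : ir < l := by rw [Fin.lt_def]; simp [hl_def]
        have hl2 : l < iq := by rw [Fin.lt_def]; simp [hl_def]; omega
        have hlS : l ∈ Sf f hf := hint hirS hiqS (le_of_lt hl1) (le_of_lt hl2)
        have hp := hpkg l hlS
        have hol := hother l hlS (ne_of_lt hl2) (ne_of_gt hl1)
        have h1 := hposmono hirS hlS hl1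
        have h2 := hposmono hlS hiqS hl2
        omega
      refine ⟨ir, iq, hadjB, by rw [hσ_def, Equiv.swap_comm], ne_of_lt hlabQR, ?_⟩
      apply strictmono_patch (fun i => fkey (f i)) _ ir iq hadjB hkeymono
      · intro i h1 h2; rw [hgout i h2 h1]
      · intro γ hγ
        rw [hgir]
        by_cases hγS : γ ∈ Sf f hf
        · apply fatLt_key
          refine Or.inr ⟨?_, ?_⟩
          · rw [hmirb, (hmemS γ).mp hγS, (hmemS iq).mp hiqS]
          · rw [hmirpos]
            have hγiq : γ ≠ iq := by
              have : (γ : ℕ) < (iq : ℕ) := by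
                have h' : (γ : ℕ) < (ir : ℕ) := hγ
                omega
              intro hh; rw [hh] at this; omega
            have hγir : γ ≠ ir := ne_of_lt hγ
            have hp := hpkg γ hγS
            have hol := hother γ hγS hγiq hγir
            have h1 := hposmono hγS hirS hγ
            show pos γ < L - 1 - pos iq
            omega
        · apply fatLt_key
          refine Or.inl ?_
          rw [hmirb]
          have hle : (f γ).1 ≤ (f ir).1 := hbead (le_of_lt hγ)
          rw [(hmemS ir).mp hirS] at hle
          rw [(hmemS iq).mp hiqS]
          exact lt_of_le_of_ne hle fun hh => hγS ((hmemS γ).mpr hh)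
      · rw [hgir, hgiq]
        apply fatLt_key
        refine Or.inr ⟨?_, ?_⟩
        · rw [hmirb, (hmemS ir).mp hirS, (hmemS iq).mp hiqS]
        · rw [hmirpos]
          show L - 1 - pos iq < pos ir
          omega
      · intro γ hγ
        rw [hgiq]
        exact hkeymono (lt_trans hirlt hγ)
  -- the four goals
  have hσS : ∀ i, σ i ∈ Sf f hf ↔ i ∈ Sf f hf := by
    intro i
    by_cases h1 : i = iq
    · subst h1; rw [hσiq]; simp [hirS, hiqS]
    · by_cases h2 : i = ir
      · subst h2; rw [hσir]; simp [hirS, hiqS]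
      · rw [hσout i h1 h2]
  have hglabinj : Function.Injective fun i => fatLabel k m w (g i) := by
    intro x y hxy
    simp only [hglab] at hxy
    exact σ.injective (hinj' hxy)
  have hBadg : BadSelection k m w g := by
    refine ⟨⟨fun i j h => key_fatLt (hmono_g h), hglabinj⟩, iq, ir, hne, ?_⟩
    rw [hgbead iq, hgbead ir, hσiq, hσir, (hmemS ir).mp hirS, (hmemS iq).mp hiqS]
  refine ⟨hBadg, ?_, ?_, ?_⟩
  · -- involution
    intro hg
    have hσσ : ∀ i, σ (σ i) = i := fun i => Equiv.swap_apply_self _ _ _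
    have hbeadcard : ∀ b, (beadFil g b).card = (beadFil f b).card := by
      intro b
      apply Finset.card_bij' (fun i _ => σ i) (fun i _ => σ i)
      · intro i hi
        simp only [beadFil, Finset.mem_filter] at hi ⊢
        exact ⟨Finset.mem_univ _, by rw [← hgbead]; exact hi.2⟩
      · intro i hi
        simp only [beadFil, Finset.mem_filter] at hi ⊢
        exact ⟨Finset.mem_univ _, by rw [hgbead, hσσ]; exact hi.2⟩
      · intro i _; exact hσσ i
      · intro i _; exact hσσ i
    have hbeadSet : beadSet g = beadSet f := by
      ext b; simp [beadSet, hbeadcard]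
    have hb0g : bstar g hg = b0 := by
      rw [hb0_def]
      exact min'_congr hbeadSet _
    have hSg : Sf g hg = Sf f hf := by
      show beadFil g (bstar g hg) = beadFil f b0
      rw [hb0g]
      ext i
      simp only [beadFil, Finset.mem_filter, hgbead]
      constructor
      · rintro ⟨_, h⟩
        exact ⟨Finset.mem_univ _, by
          have := (hσS i).mp ((hmemS (σ i)).mpr h)
          exact (hmemS i).mp this⟩
      · rintro ⟨_, h⟩
        exact ⟨Finset.mem_univ _, by
          have := (hσS i).mpr ((hmemS i).mpr h)
          exact (hmemS (σ i)).mp this⟩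
    have hlabg : labf g = labf f ∘ σ := funext hglab
    have hinjg : Function.Injective (labf g) := by
      rw [hlabg]; exact hinj'.comp σ.injective
    have hirg : irf g hg = iq := by
      apply argminLab_unique _ _ _ hinjg
      · rw [hSg]; exact hiqS
      · intro i hi
        rw [hSg] at hi
        have h1 : labf g iq = labf f ir := by rw [hlabg]; simp [hσiq]
        rw [h1, hlabg]
        exact hirmin (σ i) ((hσS i).mpr hi)
    have hiqg : iqf g hg = ir := by
      apply argminLab_unique _ _ _ hinjg
      · rw [hirg, hSg]; exact Finset.mem_erase.mpr ⟨Ne.symm hne, hirS⟩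
      · intro i hi
        rw [hirg, hSg] at hi
        obtain ⟨hi1, hi2⟩ := Finset.mem_erase.mp hi
        have h1 : labf g ir = labf f iq := by rw [hlabg]; simp [hσir]
        rw [h1, hlabg]
        simp only [Function.comp_apply]
        by_cases hx : σ i = iq
        · rw [hx]
        · have hσi : σ i ∈ Sf f hf := (hσS i).mpr hi2
          have hσi' : σ i ≠ ir := by
            intro hh
            apply hi1
            have := congrArg σ hh
            rw [hσσ, hσir] at this
            exact this
          exact hiqmin (σ i) (Finset.mem_erase.mpr ⟨hσi', hσi⟩)
    funext i
    show Function.update g (iqf g hg) (mir (g (iqf g hg)))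
        (Equiv.swap (iqf g hg) (irf g hg) i) = f i
    rw [hiqg, hirg]
    have hmirg : mir (g ir) = f iq := by rw [hgir, mir_mir]
    rw [hmirg, Equiv.swap_comm]
    by_cases h1 : i = iq
    · subst h1
      rw [Equiv.swap_apply_left, Function.update_self]
    · by_cases h2 : i = ir
      · subst h2
        rw [Equiv.swap_apply_right, Function.update_of_ne hne]
        exact hgiq
      · rw [Equiv.swap_apply_of_ne_of_ne h1 h2, Function.update_of_ne h2]
        exact hgout i h1 h2
  · -- not equal
    intro hgf
    have h1 := congrFun hgf ir
    rw [hgir] at h1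
    have h2 := congrArg (fatLabel k m w) h1
    rw [label_mir hw] at h2
    have : labf f iq = labf f ir := h2
    omega
  · -- parity
    have hs_eq : sfun g = sfun f ∘ Equiv.swap (Fin.castSucc α) (Fin.castSucc β) := by
      funext i
      simp only [Function.comp_apply]
      by_cases hi : (i : ℕ) < k
      · have hcast : Equiv.swap (Fin.castSucc α) (Fin.castSucc β) i
            = Fin.castSucc (Equiv.swap α β ⟨(i : ℕ), hi⟩) := by
          conv_lhs => rw [show i = Fin.castSucc ⟨(i : ℕ), hi⟩ from Fin.ext rfl]
          exact (Fin.castSucc_injective k).swap_apply _ _ _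
        rw [hcast]
        have hj : ((Fin.castSucc (Equiv.swap α β ⟨(i : ℕ), hi⟩)) : ℕ) < k := by
          simp only [Fin.coe_castSucc]
          exact (Equiv.swap α β ⟨(i : ℕ), hi⟩).isLt
        simp only [sfun]
        rw [dif_pos hi, dif_pos hj]
        have he : (⟨((Fin.castSucc (Equiv.swap α β ⟨(i : ℕ), hi⟩)) : ℕ), hj⟩ : Fin k)
            = Equiv.swap α β ⟨(i : ℕ), hi⟩ := Fin.ext (by simp)
        rw [he, ← hσαβ]
        exact hglab _
      · have h1 : Equiv.swap (Fin.castSucc α) (Fin.castSucc β) i = i := by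
          apply Equiv.swap_apply_of_ne_of_ne
          · intro hh
            rw [hh] at hi
            exact hi (by simp only [Fin.coe_castSucc]; exact α.isLt)
          · intro hh
            rw [hh] at hi
            exact hi (by simp only [Fin.coe_castSucc]; exact β.isLt)
        rw [h1]
        simp only [sfun]
        rw [dif_neg hi, dif_neg hi]
        have hsum : ∑ j : Fin k, fatLabel k m w (g j) = ∑ j : Fin k, fatLabel k m w (f j) := by
          calc ∑ j : Fin k, fatLabel k m w (g j) = ∑ j : Fin k, labf f (σ j) :=
                Finset.sum_congr rfl fun j _ => hglab j
            _ = ∑ j : Fin k, labf f j := Equiv.sum_comp σ (labf f)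
            _ = _ := rfl
        rw [hsum]
    have hadj' : ((Fin.castSucc α : Fin (k + 1)) : ℕ) + 1 = ((Fin.castSucc β) : ℕ) := by
      simp only [Fin.coe_castSucc]
      exact hαβ
    have hαk : ((Fin.castSucc α : Fin (k + 1)) : ℕ) < k := by
      simp only [Fin.coe_castSucc]; exact α.isLt
    have hβk : ((Fin.castSucc β : Fin (k + 1)) : ℕ) < k := by
      simp only [Fin.coe_castSucc]; exact β.isLt
    have hneS : sfun f (Fin.castSucc α) ≠ sfun f (Fin.castSucc β) := by
      simp only [sfun]
      rw [dif_pos hαk, dif_pos hβk]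
      have e1 : (⟨((Fin.castSucc α : Fin (k + 1)) : ℕ), hαk⟩ : Fin k) = α := Fin.ext (by simp)
      have e2 : (⟨((Fin.castSucc β : Fin (k + 1)) : ℕ), hβk⟩ : Fin k) = β := Fin.ext (by simp)
      rw [e1, e2]
      exact hlabαβ
    rw [fatParity_def, fatParity_def, hs_eq]
    exact adj_swap_parity (sfun f) _ _ hadj' hneS

end BadCancel

/-- in counting `p(F(ν))` for the fattening of a necklace `ν` on letters
`{1,…,k+1}` (`k+1` odd), the selections choosing at least two beads from the same
cluster can be partitioned into pairs with opposite permutation parity; consequently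
their total signed contribution to `p(F(ν))` is zero. -/
theorem bad_selections_cancel (k m : ℕ) (hodd : Odd (k + 1)) (w : Fin m → ℕ)
    (hw : ∀ b, w b ≤ k) :
    (∃ φ : (Fin k → FatPos k m w) → (Fin k → FatPos k m w),
        ∀ f, BadSelection k m w f →
          BadSelection k m w (φ f) ∧ φ (φ f) = f ∧ φ f ≠ f ∧
            fatParity k m w (φ f) = -fatParity k m w f) ∧
    ∑ f ∈ Finset.univ.filter (BadSelection k m w), fatParity k m w f = 0 := by
  classical
  set φ : (Fin k → FatPos k m w) → (Fin k → FatPos k m w) :=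
    fun f => if h : BadSelection k m w f then BadCancel.construct f h else f with hφ
  have hspec : ∀ f, BadSelection k m w f →
      BadSelection k m w (φ f) ∧ φ (φ f) = f ∧ φ f ≠ f ∧
        fatParity k m w (φ f) = -fatParity k m w f := by
    intro f hf
    obtain ⟨h1, h2, h3, h4⟩ := BadCancel.construct_spec hw f hf
    have hφf : φ f = BadCancel.construct f hf := dif_pos hf
    rw [hφf]
    refine ⟨h1, ?_, h3, h4⟩
    rw [show φ (BadCancel.construct f hf)
        = BadCancel.construct (BadCancel.construct f hf) h1 from dif_pos h1]
    exact h2 h1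
  constructor
  · exact ⟨φ, hspec⟩
  · apply Finset.sum_involution (fun f _ => φ f)
    · intro f hf
      have hb : BadSelection k m w f := (Finset.mem_filter.mp hf).2
      rw [(hspec f hb).2.2.2]
      ring
    · intro f hf _
      exact (hspec f (Finset.mem_filter.mp hf).2).2.2.1
    · intro f hf
      exact Finset.mem_filter.mpr ⟨Finset.mem_univ _, (hspec f (Finset.mem_filter.mp hf).2).1⟩
    · intro f hf
      exact (hspec f (Finset.mem_filter.mp hf).2).2.1
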